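/- Let ν : ℕ → ℝ satisfy ν₀ = 1, νₙ ≤ 1 for all n, and the recursion ν_{n+1} ≥ 1 - (12(1-νₙ) + 2E/S)/(1 - 1/(2S)) for some constants E ≥ 0 and S ≥ 1. Then for all n ≥ 1, νₙ ≥ 1 - (2E/S) · ((12/(1-1/(2S)))ⁿ - 1)/(11 + 1/(2S)) ≥ 1 - (2E/(11S)) (12/(1-1/(2S)))ⁿ. -/

import Mathlib

theorem nu_recursion (E S : ℝ) (hE : 0 ≤ E) (hS : 1 ≤ S) (ν : ℕ → ℝ)
    (h0 : ν 0 = 1) (hle : ∀ n, ν n ≤ 1)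
    (hrec : ∀ n, ν (n + 1) ≥ 1 - (12 * (1 - ν n) + 2 * E / S) / (1 - 1 / (2 * S))) :
    ∀ n : ℕ, 1 ≤ n →
      ν n ≥ 1 - (2 * E / S) * ((12 / (1 - 1 / (2 * S))) ^ n - 1) / (11 + 1 / (2 * S)) ∧
      1 - (2 * E / S) * ((12 / (1 - 1 / (2 * S))) ^ n - 1) / (11 + 1 / (2 * S))
        ≥ 1 - (2 * E / (11 * S)) * (12 / (1 - 1 / (2 * S))) ^ n := by
  have hS0 : (0:ℝ) < S := lt_of_lt_of_le one_pos hS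
  have hinv : 0 < 1 / (2 * S) := by positivity
  have hinv2 : 1 / (2 * S) ≤ 1 / 2 := by
    rw [div_le_div_iff₀ (by positivity) (by norm_num)]; linarith
  have hc : (0:ℝ) < 1 - 1 / (2 * S) := by linarith
  have hES : 0 ≤ 2 * E / S := by positivity
  have ha1 : (1:ℝ) ≤ 12 / (1 - 1 / (2 * S)) := by
    rw [le_div_iff₀ hc]; linarith
  have key : ∀ n, 1 - ν n ≤
      (2 * E / S) * ((12 / (1 - 1 / (2 * S))) ^ n - 1) / (11 + 1 / (2 * S)) := by
    intro n
    induction n with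
    | zero => simp [h0]
    | succ n ih =>
      have h1 : 1 - ν (n + 1) ≤ (12 * (1 - ν n) + 2 * E / S) / (1 - 1 / (2 * S)) := by
        have := hrec n; linarith
      have hd : (0:ℝ) < 11 + 1 / (2 * S) := by linarith
      have hcne : (1 - 1 / (2 * S)) ≠ 0 := ne_of_gt hc
      have hdne : (11 + 1 / (2 * S)) ≠ 0 := ne_of_gt hd
      have h2 : (12 * (1 - ν n) + 2 * E / S) / (1 - 1 / (2 * S)) ≤
          (12 * ((2 * E / S) * ((12 / (1 - 1 / (2 * S))) ^ n - 1) / (11 + 1 / (2 * S)))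
            + 2 * E / S) / (1 - 1 / (2 * S)) := by
        gcongr
      have heq : (12 * ((2 * E / S) * ((12 / (1 - 1 / (2 * S))) ^ n - 1) / (11 + 1 / (2 * S)))
            + 2 * E / S) / (1 - 1 / (2 * S))
          = (2 * E / S) * ((12 / (1 - 1 / (2 * S))) ^ (n + 1) - 1) / (11 + 1 / (2 * S)) := by
        rw [pow_succ]
        generalize (12 / (1 - 1 / (2 * S))) ^ n = p
        have h1 : (2 * S - 1) ≠ 0 := ne_of_gt (by linarith)
        have h2 : (22 * S + 1) ≠ 0 := ne_of_gt (by linarith)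
        have h3 : S ≠ 0 := ne_of_gt hS0
        have e1 : 1 - 1 / (2 * S) = (2 * S - 1) / (2 * S) := by field_simp
        have e2 : 11 + 1 / (2 * S) = (22 * S + 1) / (2 * S) := by field_simp; ring
        rw [e1, e2]
        field_simp
        ring
      linarith [heq ▸ h2]
  intro n hn
  constructor
  · have := key n; linarith
  · have hpow : (1:ℝ) ≤ (12 / (1 - 1 / (2 * S))) ^ n := one_le_pow₀ ha1
    have hEs' : 0 ≤ 2 * E / S := hES
    rw [ge_iff_le, sub_le_sub_iff_left, div_le_iff₀ (by linarith : (0:ℝ) < 11 + 1/(2*S))]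
    have h11 : 2 * E / (11 * S) * (12 / (1 - 1 / (2 * S))) ^ n * 11 ≤
        2 * E / (11 * S) * (12 / (1 - 1 / (2 * S))) ^ n * (11 + 1 / (2 * S)) := by
      have : 0 ≤ 2 * E / (11 * S) * (12 / (1 - 1 / (2 * S))) ^ n := by positivity
      nlinarith
    have heq : 2 * E / (11 * S) * (12 / (1 - 1 / (2 * S))) ^ n * 11
        = 2 * E / S * (12 / (1 - 1 / (2 * S))) ^ n := by
      field_simp
    nlinarith [mul_le_mul_of_nonneg_left hpow hES]
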